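/- The function δ(x) = ln((√x - 1)/(√x + 1)) + 2/√(x-1) is nonnegative for all x > 1. -/

import Mathlib

lemma two_log_le_sub_inv (u : ℝ) (hu : 1 ≤ u) : 2 * Real.log u ≤ u - u⁻¹ := by
  set g : ℝ → ℝ := fun v => v - v⁻¹ - 2 * Real.log v with hg
  have hder : ∀ v : ℝ, v ≠ 0 →
      HasDerivAt g (1 - (-(v ^ 2)⁻¹) - 2 * v⁻¹) v := fun v hv =>
    ((hasDerivAt_id v).sub (hasDerivAt_inv hv)).sub
      ((Real.hasDerivAt_log hv).const_mul 2)
  have hmono : MonotoneOn g (Set.Ici 1) := by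
    apply monotoneOn_of_deriv_nonneg (convex_Ici 1)
    · intro v hv
      have hv0 : v ≠ 0 := by simp at hv; linarith
      exact (hder v hv0).continuousAt.continuousWithinAt
    · intro v hv
      rw [interior_Ici] at hv
      have hv0 : v ≠ 0 := by simp at hv; linarith
      exact (hder v hv0).differentiableAt.differentiableWithinAt
    · intro v hv
      rw [interior_Ici] at hv
      have hv1 : (1:ℝ) < v := hv
      have hv0 : v ≠ 0 := by linarith
      rw [(hder v hv0).deriv]
      have h1 : (v ^ 2)⁻¹ = (v⁻¹) ^ 2 := by rw [inv_pow]
      nlinarith [sq_nonneg (1 - v⁻¹)]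
  have h1 : g 1 ≤ g u := hmono Set.self_mem_Ici hu hu
  simp [hg] at h1
  linarith

theorem stmt_5 (x : ℝ) (hx : 1 < x) :
    0 ≤ Real.log ((Real.sqrt x - 1) / (Real.sqrt x + 1)) + 2 / Real.sqrt (x - 1) := by
  set s := Real.sqrt x with hs
  have hs1 : 1 < s := by
    rw [hs, show (1:ℝ) = Real.sqrt 1 by simp]
    exact Real.sqrt_lt_sqrt (by norm_num) hx
  have hs0 : 0 < s - 1 := by linarith
  have hsq : s ^ 2 = x := Real.sq_sqrt (by linarith)
  set y : ℝ := (s + 1) / (s - 1) with hy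
  have hy1 : 1 ≤ y := by
    rw [hy, le_div_iff₀ hs0]; linarith
  have hy0 : 0 < y := by linarith
  set u := Real.sqrt y with hu
  have hu1 : 1 ≤ u := by
    rw [hu, show (1:ℝ) = Real.sqrt 1 by simp]
    exact Real.sqrt_le_sqrt hy1
  have hlog : Real.log ((s - 1) / (s + 1)) = - Real.log y := by
    rw [show (s - 1) / (s + 1) = y⁻¹ by rw [hy, inv_div], Real.log_inv]
  have hlogy : Real.log y = 2 * Real.log u := by
    rw [hu, Real.log_sqrt (le_of_lt hy0)]; ring
  have key := two_log_le_sub_inv u hu1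
  -- compute u - u⁻¹ = 2 / Real.sqrt (x - 1)
  set a := Real.sqrt (s + 1) with ha
  set b := Real.sqrt (s - 1) with hb
  have ha0 : 0 < a := Real.sqrt_pos.mpr (by linarith)
  have hb0 : 0 < b := Real.sqrt_pos.mpr hs0
  have ha2 : a ^ 2 = s + 1 := Real.sq_sqrt (by linarith)
  have hb2 : b ^ 2 = s - 1 := Real.sq_sqrt (le_of_lt hs0)
  have hab : a * b = Real.sqrt (x - 1) := by
    rw [ha, hb, ← Real.sqrt_mul (by linarith), show (s+1)*(s-1) = s^2 - 1 by ring, hsq]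
  have huab : u = a / b := by
    rw [hu, hy, ha, hb, Real.sqrt_div' _ (by linarith)]
  have hcalc : u - u⁻¹ = 2 / Real.sqrt (x - 1) := by
    rw [huab, ← hab]
    field_simp
    have h2 : a * a - b * b = 2 := by nlinarith [ha2, hb2]
    linarith [ha2, hb2]
  rw [hlog]
  rw [hlogy] at *
  linarith
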